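/- arXiv:2301.09585 — 2 statements merged into one kernel-verified Lean document; each statement's English description precedes it below -/
import Mathlib

section
/- In a spherical triangle with angles α₁', α₂', θ' and opposite sides r₂, r₁, r₃, the partial derivative of ℓ₁ = 2α₁' sin(r₁) with respect to k₂ = cot(r₂), holding k₁ = cot(r₁) fixed, equals -2 sin²(r₁) sin²(α₁')/sin(θ'). -/
open Real

/-- Inverse cotangent, with values in `(0, π)`. -/
noncomputable def arccot (x : ℝ) : ℝ := π / 2 - Real.arctan x

/-- Fix `θ' ∈ (0, π)` and `r₁ ∈ (0, π/2)`.  Define the half-angle `α₁'` as a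
function of `k₂ = cot r₂` by the cotangent four-part formula
`α₁'(k₂) = arccot ((k₂ sin r₁ - cos r₁ cos θ') / sin θ')`, and set `ℓ₁(k₂) = 2 α₁'(k₂) sin r₁`.
Then `∂ℓ₁/∂k₂ = -2 sin²(r₁) sin²(α₁') / sin θ'` (with `k₁ = cot r₁` held fixed). -/
theorem deriv_ell_one (θ' r₁ k₂ : ℝ) (hθ' : θ' ∈ Set.Ioo 0 π) (h₁ : r₁ ∈ Set.Ioo 0 (π / 2)) :
    HasDerivAt
      (fun k : ℝ =>
        2 * arccot ((k * Real.sin r₁ - Real.cos r₁ * Real.cos θ') / Real.sin θ') * Real.sin r₁)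
      (-2 * Real.sin r₁ ^ 2 *
        Real.sin (arccot ((k₂ * Real.sin r₁ - Real.cos r₁ * Real.cos θ') / Real.sin θ')) ^ 2 /
        Real.sin θ')
      k₂ := by
  have hsθ : Real.sin θ' > 0 := Real.sin_pos_of_pos_of_lt_pi hθ'.1 hθ'.2
  set u : ℝ → ℝ := fun k => (k * Real.sin r₁ - Real.cos r₁ * Real.cos θ') / Real.sin θ' with hu
  have hu' : HasDerivAt u (Real.sin r₁ / Real.sin θ') k₂ := by
    have : HasDerivAt (fun k : ℝ => k * Real.sin r₁ - Real.cos r₁ * Real.cos θ')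
        (Real.sin r₁) k₂ := by
      simpa using ((hasDerivAt_id k₂).mul_const (Real.sin r₁)).sub_const
        (Real.cos r₁ * Real.cos θ')
    exact this.div_const (Real.sin θ')
  have harctan : HasDerivAt (fun k : ℝ => Real.arctan (u k))
      (1 / (1 + u k₂ ^ 2) * (Real.sin r₁ / Real.sin θ')) k₂ :=
    (Real.hasDerivAt_arctan (u k₂)).comp k₂ hu'
  have hmain : HasDerivAt
      (fun k : ℝ => 2 * arccot (u k) * Real.sin r₁)
      (-(2 * (1 / (1 + u k₂ ^ 2) * (Real.sin r₁ / Real.sin θ')) * Real.sin r₁)) k₂ := by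
    have := ((harctan.const_sub (π / 2)).const_mul 2).mul_const (Real.sin r₁)
    simpa [arccot, mul_comm, mul_left_comm, mul_assoc] using this
  have hsin : Real.sin (arccot (u k₂)) ^ 2 = 1 / (1 + u k₂ ^ 2) := by
    rw [arccot, Real.sin_pi_div_two_sub, Real.cos_arctan]
    rw [div_pow, one_pow, Real.sq_sqrt (by positivity)]
  convert hmain using 1
  rw [hsin]
  field_simp
end

section
/- The 1-form ω_θ = ℓ₁ dk₁ + ℓ₂ dk₂ on the moduli space of spherical bigons of angle θ is closed; equivalently, ∂ℓ₁/∂k₂ = ∂ℓ₂/∂k₁ in the coordinates (k₁, k₂) ∈ (0,∞)². -/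
open Real

/-- The length `ℓ₁ = 2 α₁' sin r₁` of the first side of the spherical bigon of angle `θ`,
as a function of the geodesic curvatures `(k₁, k₂)`, where `r₁ = arccot k₁` and the half-angle
`α₁'` is given by the cotangent four-part formula
`cot α₁' = (k₂ sin r₁ - cos r₁ cos (π - θ)) / sin (π - θ)`. -/
noncomputable def ell₁ (θ k₁ k₂ : ℝ) : ℝ :=
  2 * arccot ((k₂ * Real.sin (arccot k₁) - Real.cos (arccot k₁) * Real.cos (π - θ)) /
      Real.sin (π - θ)) * Real.sin (arccot k₁)

/-- The length of the second side: obtained from `ell₁` by swapping the two sides. -/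
noncomputable def ell₂ (θ k₁ k₂ : ℝ) : ℝ := ell₁ θ k₂ k₁

lemma deriv_ell₁_snd (θ k₁ k₂ : ℝ) (hθ : θ ∈ Set.Ioo 0 π) :
    deriv (fun y : ℝ => ell₁ θ k₁ y) k₂ =
      -2 * Real.sin (π - θ) /
        ((Real.sin (π - θ)) ^ 2 + k₁ ^ 2 + k₂ ^ 2 - 2 * k₁ * k₂ * Real.cos (π - θ)) := by
  obtain ⟨hθ0, hθπ⟩ := hθ
  set S := Real.sin (π - θ) with hSdef
  set C := Real.cos (π - θ) with hCdef
  have hS : 0 < S := Real.sin_pos_of_pos_of_lt_pi (by linarith) (by linarith)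
  have hSne : S ≠ 0 := ne_of_gt hS
  have hSC : S ^ 2 + C ^ 2 = 1 := Real.sin_sq_add_cos_sq _
  set s := Real.sin (arccot k₁) with hsdef
  set c := Real.cos (arccot k₁) with hcdef
  have hs : s = 1 / Real.sqrt (1 + k₁ ^ 2) := by
    rw [hsdef, arccot, Real.sin_pi_div_two_sub, Real.cos_arctan]
  have hc : c = k₁ / Real.sqrt (1 + k₁ ^ 2) := by
    rw [hcdef, arccot, Real.cos_pi_div_two_sub, Real.sin_arctan]
  have hq : (0:ℝ) < 1 + k₁ ^ 2 := by positivity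
  have hr : Real.sqrt (1 + k₁ ^ 2) ^ 2 = 1 + k₁ ^ 2 := Real.sq_sqrt (le_of_lt hq)
  have hrne : Real.sqrt (1 + k₁ ^ 2) ≠ 0 := by positivity
  set g : ℝ → ℝ := fun y => (y * s - c * C) / S with hgdef
  have hg : HasDerivAt g (s / S) k₂ := by
    have : HasDerivAt (fun y : ℝ => (y * s - c * C) / S) ((1 * s) / S) k₂ :=
      (((hasDerivAt_id k₂).mul_const s).sub_const (c * C)).div_const S
    simpa using this
  have harctan : HasDerivAt (fun y : ℝ => Real.arctan (g y))
      ((1 / (1 + g k₂ ^ 2)) * (s / S)) k₂ :=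
    (Real.hasDerivAt_arctan (g k₂)).comp k₂ hg
  have hfull : HasDerivAt (fun y : ℝ => ell₁ θ k₁ y)
      (2 * (0 - (1 / (1 + g k₂ ^ 2)) * (s / S)) * s) k₂ := by
    have : HasDerivAt (fun y : ℝ => 2 * (π / 2 - Real.arctan (g y)) * s)
        (2 * (0 - (1 / (1 + g k₂ ^ 2)) * (s / S)) * s) k₂ :=
      (((hasDerivAt_const k₂ (π / 2)).sub harctan).const_mul 2).mul_const s
    convert this using 2
    rfl
  rw [hfull.deriv]
  have hgpos : (0:ℝ) < 1 + g k₂ ^ 2 := by positivity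
  have hD : (0:ℝ) < S ^ 2 + k₁ ^ 2 + k₂ ^ 2 - 2 * k₁ * k₂ * C := by
    nlinarith [sq_nonneg (k₁ - k₂ * C), sq_nonneg (k₂ * S)]
  rw [hgdef, hs, hc]
  simp only []
  rw [eq_div_iff (ne_of_gt hD)]
  field_simp
  linear_combination (Real.sqrt (1 + k₁ ^ 2) * S ^ 3) * hr +
    (Real.sqrt (1 + k₁ ^ 2) * S * k₁ ^ 2) * hSC

/-- The 1-form `ω_θ = ℓ₁ dk₁ + ℓ₂ dk₂` on the moduli space of spherical bigons
of angle `θ ∈ (0, π)` is closed: in the coordinates `(k₁, k₂) ∈ (0, ∞)²` one has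
`∂ℓ₁/∂k₂ = ∂ℓ₂/∂k₁`. -/
theorem one_form_closed (θ : ℝ) (hθ : θ ∈ Set.Ioo 0 π) (k₁ k₂ : ℝ) (hk₁ : 0 < k₁)
    (hk₂ : 0 < k₂) :
    deriv (fun y : ℝ => ell₁ θ k₁ y) k₂ = deriv (fun x : ℝ => ell₂ θ x k₂) k₁ := by
  have h1 := deriv_ell₁_snd θ k₁ k₂ hθ
  have h2 := deriv_ell₁_snd θ k₂ k₁ hθ
  have : (fun x : ℝ => ell₂ θ x k₂) = fun x : ℝ => ell₁ θ k₂ x := by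
    funext x; rfl
  rw [h1, this, h2]
  ring_nf
end
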